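/- The discrete map T₁ on ℝⁿ × ℝⁿ × ℝ given by X_{k+1} = P_k, P_{k+1} = X_{k+1} + ((k−1)/(k+2))(X_{k+1} − X_k), S_{k+1} = ((k−1)/(k+2)) S_k, satisfies the pullback identity dS_{k+1} − (1/2)P_{k+1} dX_{k+1} + (1/2)X_{k+1} dP_{k+1} = ((k−1)/(k+2)) [dS_k − (1/2)P_k dX_k + (1/2)X_k dP_k], i.e. it is a contact transformation of the form η with conformal factor (k−1)/(k+2) (for k ≥ 2). -/
import Mathlib


/-- Euclidean pairing on `ℝⁿ`. -/
def dot {n : ℕ} (x y : Fin n → ℝ) : ℝ := ∑ i, x i * y i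

/-- The contact form `η = dS − ½ P dX + ½ X dP` at point `q = (X, P, S)` on the
tangent vector `t = (u, v, w)`. -/
noncomputable def eta {n : ℕ} (q t : (Fin n → ℝ) × (Fin n → ℝ) × ℝ) : ℝ :=
  t.2.2 - (1 / 2) * dot q.2.1 t.1 + (1 / 2) * dot q.1 t.2.1

/-- The discrete map `T₁ : (X, P, S) ↦ (P, P + c(P − X), cS)` with `c = (k−1)/(k+2)`. -/
def Tmap {n : ℕ} (c : ℝ) (q : (Fin n → ℝ) × (Fin n → ℝ) × ℝ) :
    (Fin n → ℝ) × (Fin n → ℝ) × ℝ :=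
  (q.2.1, fun i => q.2.1 i + c * (q.2.1 i - q.1 i), c * q.2.2)

/-- `Tmap c` as a continuous linear map. -/
noncomputable def Tlin {n : ℕ} (c : ℝ) :
    ((Fin n → ℝ) × (Fin n → ℝ) × ℝ) →L[ℝ] ((Fin n → ℝ) × (Fin n → ℝ) × ℝ) :=
  LinearMap.toContinuousLinearMap
    { toFun := Tmap c
      map_add' := by
        intro a b
        simp only [Tmap, Prod.ext_iff, Prod.fst_add, Prod.snd_add, Pi.add_apply,
          funext_iff]
        exact ⟨trivial, fun i => by ring, by ring⟩
      map_smul' := by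
        intro m a
        simp only [Tmap, Prod.ext_iff, Prod.smul_fst, Prod.smul_snd, Pi.smul_apply,
          smul_eq_mul, RingHom.id_apply, funext_iff]
        exact ⟨trivial, fun i => by ring, by ring⟩ }

lemma Tlin_apply {n : ℕ} (c : ℝ) (t : (Fin n → ℝ) × (Fin n → ℝ) × ℝ) :
    Tlin c t = Tmap c t := rfl

lemma fderiv_Tmap {n : ℕ} (c : ℝ) (q : (Fin n → ℝ) × (Fin n → ℝ) × ℝ) :
    fderiv ℝ (Tmap c) q = Tlin c := by
  have : Tmap (n := n) c = fun x => Tlin c x := rfl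
  rw [this]
  exact (Tlin c).fderiv

lemma dot_add_left {n : ℕ} (x y z : Fin n → ℝ) :
    dot (fun i => x i + y i) z = dot x z + dot y z := by
  simp [dot, add_mul, Finset.sum_add_distrib]

lemma dot_smul_left {n : ℕ} (c : ℝ) (x z : Fin n → ℝ) :
    dot (fun i => c * x i) z = c * dot x z := by
  simp [dot, Finset.mul_sum, mul_assoc]

lemma dot_sub_left {n : ℕ} (x y z : Fin n → ℝ) :
    dot (fun i => x i - y i) z = dot x z - dot y z := by
  simp [dot, sub_mul, Finset.sum_sub_distrib]

lemma dot_add_right {n : ℕ} (x y z : Fin n → ℝ) :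
    dot z (fun i => x i + y i) = dot z x + dot z y := by
  simp [dot, mul_add, Finset.sum_add_distrib]

lemma dot_smul_right {n : ℕ} (c : ℝ) (x z : Fin n → ℝ) :
    dot z (fun i => c * x i) = c * dot z x := by
  simp only [dot, Finset.mul_sum]
  exact Finset.sum_congr rfl fun i _ => by ring

lemma dot_sub_right {n : ℕ} (x y z : Fin n → ℝ) :
    dot z (fun i => x i - y i) = dot z x - dot z y := by
  simp [dot, mul_sub, Finset.sum_sub_distrib]

/-- For every fixed integer `k ≥ 2`, the discrete map
`X_{k+1} = P_k, P_{k+1} = X_{k+1} + ((k−1)/(k+2))(X_{k+1} − X_k),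
S_{k+1} = ((k−1)/(k+2)) S_k` satisfies the pullback identity
`T₁*η = ((k−1)/(k+2)) η`, i.e. it is a contact transformation of the contact form
`η = dS − ½ P dX + ½ X dP` with conformal factor `(k−1)/(k+2)`. -/
theorem stmt9 (n : ℕ) (k : ℕ) (hk : 2 ≤ k) (c : ℝ)
    (hc : c = ((k : ℝ) - 1) / ((k : ℝ) + 2)) :
    ∀ q t : (Fin n → ℝ) × (Fin n → ℝ) × ℝ,
      eta (Tmap c q) (fderiv ℝ (Tmap c) q t) = c * eta q t := by
  intro q t
  rw [fderiv_Tmap, Tlin_apply]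
  obtain ⟨X, P, S⟩ := q
  obtain ⟨u, v, w⟩ := t
  simp only [eta, Tmap]
  have h1 : dot (fun i => P i + c * (P i - X i)) v
      = dot P v + c * (dot P v - dot X v) := by
    rw [dot_add_left, dot_smul_left, dot_sub_left]
  have h2 : dot P (fun i => v i + c * (v i - u i))
      = dot P v + c * (dot P v - dot P u) := by
    rw [dot_add_right, dot_smul_right, dot_sub_right]
  rw [h1, h2]
  ring
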